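/- Let β > 2, N ≥ 1 and z ≥ 0. Then R_N^β(z) ≥ z² − 1. In particular, for z ≥ 1 one has R_N^β(z) ≥ z². -/

import Mathlib

open intervalIntegral MeasureTheory

/-- The truncated power `S_N^γ(z) := γ · ∫_0^z max(0, min(N, s))^{γ−1} ds`. -/
noncomputable def truncPow (N γ : ℝ) (z : ℝ) : ℝ :=
  γ * ∫ s in (0 : ℝ)..z, max 0 (min N s) ^ (γ - 1)

/-- The doubly integrated truncation `R_N^β(z) := β · ∫_0^z S_N^{β−1}(s) ds`. -/
noncomputable def truncPow2 (N β : ℝ) (z : ℝ) : ℝ :=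
  β * ∫ s in (0 : ℝ)..z, truncPow N (β - 1) s

lemma cont_f (N γ : ℝ) (hγ : 1 < γ) :
    Continuous (fun s : ℝ => max 0 (min N s) ^ (γ - 1)) :=
  (continuous_const.max (continuous_const.min continuous_id)).rpow_const
    (fun _ => Or.inr (by linarith))

lemma truncPow_eq (N γ : ℝ) (hγ : 1 < γ) (hN : 1 ≤ N) {s : ℝ} (h0 : 0 ≤ s) (h1 : s ≤ 1) :
    truncPow N γ s = s ^ γ := by
  have hγ0 : γ ≠ 0 := by linarith
  have hcong : ∀ t ∈ Set.uIcc (0:ℝ) s, max 0 (min N t) ^ (γ-1) = t ^ (γ-1) := by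
    intro t ht
    rw [Set.uIcc_of_le h0] at ht
    rw [min_eq_right (le_trans ht.2 (h1.trans hN)), max_eq_right ht.1]
  rw [truncPow, intervalIntegral.integral_congr hcong,
    integral_rpow (Or.inl (by linarith)), show γ - 1 + 1 = γ by ring,
    Real.zero_rpow hγ0]
  field_simp
  simp

lemma truncPow_nonneg (N γ : ℝ) (hγ : 1 < γ) {s : ℝ} (h0 : 0 ≤ s) :
    0 ≤ truncPow N γ s := by
  refine mul_nonneg (by linarith) (intervalIntegral.integral_nonneg h0 ?_)
  intro t _
  exact Real.rpow_nonneg (le_max_left _ _) _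

lemma truncPow_lb (N γ : ℝ) (hγ : 1 < γ) (hN : 1 ≤ N) {s : ℝ} (h1 : 1 ≤ s) :
    1 + γ * (s - 1) ≤ truncPow N γ s := by
  have hint : ∀ a b : ℝ, IntervalIntegrable (fun t : ℝ => max 0 (min N t) ^ (γ - 1)) volume a b :=
    fun a b => (cont_f N γ hγ).intervalIntegrable a b
  have hsplit : (∫ t in (0:ℝ)..s, max 0 (min N t) ^ (γ-1)) =
      (∫ t in (0:ℝ)..1, max 0 (min N t) ^ (γ-1)) + ∫ t in (1:ℝ)..s, max 0 (min N t) ^ (γ-1) :=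
    (intervalIntegral.integral_add_adjacent_intervals (hint 0 1) (hint 1 s)).symm
  have h01 : γ * (∫ t in (0:ℝ)..1, max 0 (min N t) ^ (γ-1)) = 1 := by
    have := truncPow_eq N γ hγ hN (zero_le_one) (le_refl (1:ℝ))
    rw [truncPow] at this
    rw [this, Real.one_rpow]
  have h1s : s - 1 ≤ ∫ t in (1:ℝ)..s, max 0 (min N t) ^ (γ-1) := by
    have h : (∫ t in (1:ℝ)..s, (1:ℝ)) ≤ ∫ t in (1:ℝ)..s, max 0 (min N t) ^ (γ-1) := by
      refine intervalIntegral.integral_mono_on h1 intervalIntegrable_const (hint 1 s) ?_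
      intro t ht
      refine Real.one_le_rpow ?_ (by linarith)
      exact le_max_of_le_right (le_min hN ht.1)
    simpa using h
  rw [truncPow, hsplit, mul_add, h01]
  nlinarith [h1s]

lemma cont_S (N γ : ℝ) (hγ : 1 < γ) : Continuous (truncPow N γ) :=
  continuous_const.mul
    (intervalIntegral.continuous_primitive
      (fun a b => (cont_f N γ hγ).intervalIntegrable a b) 0)

lemma truncPow2_main (β N z : ℝ) (hβ : 2 < β) (hN : 1 ≤ N) (hz1 : 1 ≤ z) :
    z ^ 2 ≤ truncPow2 N β z := by
  have hγ : (1:ℝ) < β - 1 := by linarith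
  have hSint : ∀ a b : ℝ, IntervalIntegrable (truncPow N (β-1)) volume a b :=
    fun a b => (cont_S N (β-1) hγ).intervalIntegrable a b
  have hsplit : (∫ s in (0:ℝ)..z, truncPow N (β-1) s) =
      (∫ s in (0:ℝ)..1, truncPow N (β-1) s) + ∫ s in (1:ℝ)..z, truncPow N (β-1) s :=
    (intervalIntegral.integral_add_adjacent_intervals (hSint 0 1) (hSint 1 z)).symm
  have h01 : (∫ s in (0:ℝ)..1, truncPow N (β-1) s) = 1 / β := by
    have hcong : ∀ s ∈ Set.uIcc (0:ℝ) 1, truncPow N (β-1) s = s ^ (β-1) := by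
      intro s hs
      rw [Set.uIcc_of_le zero_le_one] at hs
      exact truncPow_eq N (β-1) hγ hN hs.1 hs.2
    rw [intervalIntegral.integral_congr hcong,
      integral_rpow (Or.inl (by linarith)), show β - 1 + 1 = β by ring,
      Real.one_rpow, Real.zero_rpow (by linarith : β ≠ 0), sub_zero]
  have h1z : (z - 1) + (β-1) * ((z-1)^2/2) ≤ ∫ s in (1:ℝ)..z, truncPow N (β-1) s := by
    have hg : IntervalIntegrable (fun s : ℝ => 1 + (β-1) * (s - 1)) volume 1 z := by
      apply Continuous.intervalIntegrable
      continuity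
    have hle : (∫ s in (1:ℝ)..z, (1 + (β-1) * (s - 1))) ≤
        ∫ s in (1:ℝ)..z, truncPow N (β-1) s := by
      refine intervalIntegral.integral_mono_on hz1 hg (hSint 1 z) ?_
      intro s hs
      exact truncPow_lb N (β-1) hγ hN hs.1
    have hval : (∫ s in (1:ℝ)..z, (1 + (β-1) * (s - 1))) =
        (z - 1) + (β-1) * ((z-1)^2/2) := by
      have : (∫ s in (1:ℝ)..z, (1 + (β-1) * (s - 1))) =
          (∫ s in (1:ℝ)..z, (2 - β)) + (β-1) * ∫ s in (1:ℝ)..z, s := by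
        rw [← intervalIntegral.integral_const_mul, ← intervalIntegral.integral_add
          intervalIntegrable_const ((intervalIntegral.intervalIntegrable_id).const_mul _)]
        congr 1; ext s; ring
      rw [this, intervalIntegral.integral_const, integral_id]
      simp only [smul_eq_mul]
      ring
    linarith
  rw [truncPow2, hsplit, h01]
  have hβ0 : (0:ℝ) < β := by linarith
  have : β * (1/β + ((z - 1) + (β-1) * ((z-1)^2/2))) ≤
      β * (1/β + ∫ s in (1:ℝ)..z, truncPow N (β-1) s) := by
    apply mul_le_mul_of_nonneg_left (by linarith) (le_of_lt hβ0)
  refine le_trans ?_ this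
  rw [mul_add, mul_one_div, div_self (ne_of_gt hβ0)]
  nlinarith [sq_nonneg (z-1), mul_nonneg (sq_nonneg (z-1)) (le_of_lt (lt_trans two_pos hβ))]

/-- For `β > 2`, `N ≥ 1` and `z ≥ 0`: `R_N^β(z) ≥ z² − 1`; in particular
`R_N^β(z) ≥ z²` for `z ≥ 1`. -/
theorem truncPow2_lower_bound (β N z : ℝ) (hβ : 2 < β) (hN : 1 ≤ N) (hz : 0 ≤ z) :
    z ^ 2 - 1 ≤ truncPow2 N β z ∧ (1 ≤ z → z ^ 2 ≤ truncPow2 N β z) := by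
  have hγ : (1:ℝ) < β - 1 := by linarith
  rcases le_or_gt 1 z with hz1 | hz1
  · have h := truncPow2_main β N z hβ hN hz1
    exact ⟨by linarith, fun _ => h⟩
  · constructor
    · have hR : 0 ≤ truncPow2 N β z := by
        refine mul_nonneg (by linarith) (intervalIntegral.integral_nonneg hz ?_)
        intro t ht
        exact truncPow_nonneg N (β-1) hγ ht.1
      nlinarith
    · intro h; linarith
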